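/- arXiv:math-ph/0611050 — 3 statements merged into one kernel-verified Lean document; each statement's English description precedes it below -/
import Mathlib

section
/- Let S₂ : ℝ → ℂ satisfy S₂(-θ) = S₂(θ)⁻¹ and |S₂(θ)| = 1 for all θ ∈ ℝ. For each transposition τ_k ∈ S_n exchanging k and k+1, define the operator D_n(τ_k) on L²(ℝⁿ) by (D_n(τ_k)f)(θ₁,...,θ_n) = S₂(θ_{k+1} - θ_k) · f(θ₁,...,θ_{k+1},θ_k,...,θ_n). Then D_n(τ_k)² = 1, D_n(τ_j) and D_n(τ_k) commute for |j-k| > 1, and D_n(τ_k)D_n(τ_{k+1})D_n(τ_k) = D_n(τ_{k+1})D_n(τ_k)D_n(τ_{k+1}); hence D_n extends to a unitary representation of the symmetric group S_n on L²(ℝⁿ). -/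
open MeasureTheory Complex

/-- The `n`-particle `L²` space over `ℝⁿ`. -/
noncomputable abbrev L2n (n : ℕ) :=
  MeasureTheory.Lp ℂ 2 (MeasureTheory.volume : MeasureTheory.Measure (Fin n → ℝ))

/-- The defining almost-everywhere action of the operator `D_n(τ_k)` on `L²(ℝⁿ)`:
`(D_n(τ_k) f)(θ₁,…,θ_n) = S₂(θ_{k+1} - θ_k) · f(θ₁,…,θ_{k+1},θ_k,…,θ_n)`. -/
def IsDnGenerator {n : ℕ} (S₂ : ℝ → ℂ) (k : ℕ) (hk : k + 1 < n)
    (D : L2n n →L[ℂ] L2n n) : Prop :=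
  ∀ f : L2n n,
    ∀ᵐ θ ∂(volume : Measure (Fin n → ℝ)),
      D f θ = S₂ (θ ⟨k + 1, hk⟩ - θ ⟨k, Nat.lt_of_succ_lt hk⟩) *
        f (fun i => θ (Equiv.swap (⟨k, Nat.lt_of_succ_lt hk⟩ : Fin n) ⟨k + 1, hk⟩ i))

namespace S0

variable {n : ℕ}

lemma measurePreserving_compPerm (σ : Equiv.Perm (Fin n)) :
    MeasurePreserving (fun θ : Fin n → ℝ => θ ∘ σ)
      (volume : Measure (Fin n → ℝ)) volume := by
  have h := MeasureTheory.volume_measurePreserving_piCongrLeft (fun _ : Fin n => ℝ)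
    (σ⁻¹ : Equiv.Perm (Fin n))
  have he : ⇑(MeasurableEquiv.piCongrLeft (fun _ : Fin n => ℝ) (σ⁻¹ : Equiv.Perm (Fin n)))
      = fun θ : Fin n → ℝ => θ ∘ σ := by
    funext θ
    funext b
    rw [MeasurableEquiv.coe_piCongrLeft]
    simp [Equiv.piCongrLeft_apply, eq_rec_constant, Equiv.Perm.inv_def]
  rwa [he] at h

lemma comp_perm_ae (σ : Equiv.Perm (Fin n)) {g g' : (Fin n → ℝ) → ℂ}
    (h : g =ᵐ[(volume : Measure (Fin n → ℝ))] g') :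
    (fun θ : Fin n → ℝ => g (θ ∘ σ)) =ᵐ[(volume : Measure (Fin n → ℝ))]
      fun θ => g' (θ ∘ σ) :=
  (measurePreserving_compPerm σ).quasiMeasurePreserving.ae_eq_comp h

/-- The multiplier cocycle: the product of `S₂ (θ (σ i) - θ (σ j))` over the inversions of σ. -/
noncomputable def mult (S₂ : ℝ → ℂ) (σ : Equiv.Perm (Fin n)) (θ : Fin n → ℝ) : ℂ :=
  ∏ p : Fin n × Fin n,
    if p.1 < p.2 ∧ σ p.2 < σ p.1 then S₂ (θ (σ p.1) - θ (σ p.2)) else 1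

section mult

variable {S₂ : ℝ → ℂ}

lemma norm_mult (hSmod : ∀ x : ℝ, ‖S₂ x‖ = 1) (σ : Equiv.Perm (Fin n)) (θ : Fin n → ℝ) :
    ‖mult S₂ σ θ‖ = 1 := by
  rw [mult, norm_prod]
  refine Finset.prod_eq_one fun p _ => ?_
  split_ifs
  · exact hSmod _
  · exact norm_one

lemma measurable_mult (hSmeas : Measurable S₂) (σ : Equiv.Perm (Fin n)) :
    Measurable (mult S₂ σ) := by
  apply Finset.measurable_prod
  intro p _
  by_cases h : p.1 < p.2 ∧ σ p.2 < σ p.1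
  · simp only [if_pos h]
    exact hSmeas.comp ((measurable_pi_apply _).sub (measurable_pi_apply _))
  · simp only [if_neg h]
    exact measurable_const

lemma mult_one_apply (θ : Fin n → ℝ) : mult S₂ 1 θ = 1 :=
  Finset.prod_eq_one fun p _ => by
    rw [if_neg]
    rintro ⟨h1, h2⟩
    simp only [Equiv.Perm.one_apply] at h2
    exact lt_asymm h1 h2

lemma key' {v w : ℂ} (hvw : v * w = 1) {i j ti tj si sj : Fin n}
    (hij : i < j) (ht : ti ≠ tj) (hs : si ≠ sj) :
    ((if ti < tj ∧ sj < si then v else 1) * (if i < j ∧ tj < ti then v else 1) *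
        (if i < j ∧ sj < si then v else 1)⁻¹) *
      ((if tj < ti ∧ si < sj then w else 1) * (if j < i ∧ ti < tj then w else 1) *
        (if j < i ∧ si < sj then w else 1)⁻¹) = 1 := by
  have hv : v ≠ 0 := left_ne_zero_of_mul_eq_one hvw
  have hnji : ¬ j < i := asymm hij
  rw [if_neg (show ¬(j < i ∧ ti < tj) from fun h => hnji h.1),
    if_neg (show ¬(j < i ∧ si < sj) from fun h => hnji h.1)]
  rcases ht.lt_or_gt with h1 | h1
  · rw [if_neg (show ¬(i < j ∧ tj < ti) from fun h => lt_asymm h1 h.2),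
      if_neg (show ¬(tj < ti ∧ si < sj) from fun h => lt_asymm h1 h.1)]
    rcases hs.lt_or_gt with h2 | h2
    · rw [if_neg (show ¬(ti < tj ∧ sj < si) from fun h => lt_asymm h2 h.2),
        if_neg (show ¬(i < j ∧ sj < si) from fun h => lt_asymm h2 h.2)]
      simp
    · rw [if_pos (show ti < tj ∧ sj < si from ⟨h1, h2⟩),
        if_pos (show i < j ∧ sj < si from ⟨hij, h2⟩)]
      simp [hv]
  · rw [if_neg (show ¬(ti < tj ∧ sj < si) from fun h => lt_asymm h1 h.1),
      if_pos (show i < j ∧ tj < ti from ⟨hij, h1⟩)]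
    rcases hs.lt_or_gt with h2 | h2
    · rw [if_neg (show ¬(i < j ∧ sj < si) from fun h => lt_asymm h2 h.2),
        if_pos (show tj < ti ∧ si < sj from ⟨h1, h2⟩)]
      simpa using hvw
    · rw [if_pos (show i < j ∧ sj < si from ⟨hij, h2⟩),
        if_neg (show ¬(tj < ti ∧ si < sj) from fun h => lt_asymm h2 h.2)]
      simp [hv]

lemma key {v w : ℂ} (hvw : v * w = 1) {i j ti tj si sj : Fin n}
    (hti : i = j → ti = tj) (hsi : ti = tj → si = sj)
    (ht : i ≠ j → ti ≠ tj) (hs : ti ≠ tj → si ≠ sj) :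
    ((if ti < tj ∧ sj < si then v else 1) * (if i < j ∧ tj < ti then v else 1) *
        (if i < j ∧ sj < si then v else 1)⁻¹) *
      ((if tj < ti ∧ si < sj then w else 1) * (if j < i ∧ ti < tj then w else 1) *
        (if j < i ∧ si < sj then w else 1)⁻¹) = 1 := by
  rcases lt_trichotomy i j with hij | rfl | hji
  · exact key' hvw hij (ht hij.ne) (hs (ht hij.ne))
  · have h1 := hti rfl
    have h2 := hsi h1
    subst h1
    subst h2
    simp [lt_irrefl]
  · rw [mul_comm]
    exact key' (by rw [mul_comm] at hvw; exact hvw) hji (ht hji.ne').symm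
      ((hs (ht hji.ne')).symm)

lemma mult_mul (hSmod : ∀ x : ℝ, ‖S₂ x‖ = 1) (hSinv : ∀ x : ℝ, S₂ (-x) = (S₂ x)⁻¹)
    (σ τ : Equiv.Perm (Fin n)) (θ : Fin n → ℝ) :
    mult S₂ (σ * τ) θ = mult S₂ σ θ * mult S₂ τ (θ ∘ σ) := by
  have hS0 : ∀ x : ℝ, S₂ x ≠ 0 := fun x h => by
    have := hSmod x
    rw [h, norm_zero] at this
    exact one_ne_zero this.symm
  have hkey : ∀ x y : ℝ, S₂ (x - y) * S₂ (y - x) = 1 := fun x y => by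
    have hxy : y - x = -(x - y) := by ring
    rw [hxy, hSinv, mul_inv_cancel₀ (hS0 _)]
  set A : Fin n × Fin n → ℂ := fun p =>
    if τ p.1 < τ p.2 ∧ σ (τ p.2) < σ (τ p.1) then S₂ (θ (σ (τ p.1)) - θ (σ (τ p.2))) else 1
    with hA
  set B : Fin n × Fin n → ℂ := fun p =>
    if p.1 < p.2 ∧ τ p.2 < τ p.1 then S₂ (θ (σ (τ p.1)) - θ (σ (τ p.2))) else 1 with hB
  set C : Fin n × Fin n → ℂ := fun p =>
    if p.1 < p.2 ∧ σ (τ p.2) < σ (τ p.1) then S₂ (θ (σ (τ p.1)) - θ (σ (τ p.2))) else 1 with hC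
  have h1 : ∏ p : Fin n × Fin n, (A p * B p * (C p)⁻¹) = 1 := by
    apply Finset.prod_ninvolution (g := Prod.swap)
    · intro p
      obtain ⟨i, j⟩ := p
      simp only [hA, hB, hC, Prod.swap_prod_mk]
      exact key (hkey (θ (σ (τ i))) (θ (σ (τ j))))
        (fun h => by rw [h]) (fun h => by rw [h])
        (fun h hh => h (τ.injective hh)) (fun h hh => h (σ.injective hh))
    · intro p hfp heq
      apply hfp
      obtain ⟨i, j⟩ := p
      have hij : j = i := congrArg Prod.fst heq
      subst hij
      simp [hA, hB, hC, lt_irrefl]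
    · intro p
      exact Finset.mem_univ _
    · intro p
      exact Prod.swap_swap p
  rw [Finset.prod_mul_distrib, Finset.prod_mul_distrib, Finset.prod_inv_distrib] at h1
  have hCne : (∏ p : Fin n × Fin n, C p) ≠ 0 := by
    refine Finset.prod_ne_zero_iff.2 fun p _ => ?_
    simp only [hC]
    split_ifs
    · exact hS0 _
    · exact one_ne_zero
  have h3 : (∏ p : Fin n × Fin n, A p) * (∏ p : Fin n × Fin n, B p)
      = ∏ p : Fin n × Fin n, C p := (mul_inv_eq_one₀ hCne).1 h1
  have eC : mult S₂ (σ * τ) θ = ∏ p : Fin n × Fin n, C p := by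
    apply Finset.prod_congr rfl
    intro p _
    simp only [hC, Equiv.Perm.mul_apply]
    exact if_congr Iff.rfl rfl rfl
  have eA : mult S₂ σ θ = ∏ p : Fin n × Fin n, A p :=
    (Fintype.prod_equiv (Equiv.prodCongr τ τ) A
      (fun q : Fin n × Fin n =>
        if q.1 < q.2 ∧ σ q.2 < σ q.1 then S₂ (θ (σ q.1) - θ (σ q.2)) else 1)
      (fun p => rfl)).symm
  have eB : mult S₂ τ (θ ∘ σ) = ∏ p : Fin n × Fin n, B p := by
    apply Finset.prod_congr rfl
    intro p _
    simp only [hB, Function.comp_apply]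
  rw [eA, eB, eC, h3]

lemma mult_swap (k : ℕ) (hk : k + 1 < n) (θ : Fin n → ℝ) :
    mult S₂ (Equiv.swap (⟨k, Nat.lt_of_succ_lt hk⟩ : Fin n) ⟨k + 1, hk⟩) θ
      = S₂ (θ ⟨k + 1, hk⟩ - θ ⟨k, Nat.lt_of_succ_lt hk⟩) := by
  have hcalc : mult S₂ (Equiv.swap (⟨k, Nat.lt_of_succ_lt hk⟩ : Fin n) ⟨k + 1, hk⟩) θ
      = (if (⟨k, Nat.lt_of_succ_lt hk⟩ : Fin n) < ⟨k + 1, hk⟩ ∧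
            Equiv.swap (⟨k, Nat.lt_of_succ_lt hk⟩ : Fin n) ⟨k + 1, hk⟩ ⟨k + 1, hk⟩ <
            Equiv.swap (⟨k, Nat.lt_of_succ_lt hk⟩ : Fin n) ⟨k + 1, hk⟩
              ⟨k, Nat.lt_of_succ_lt hk⟩
          then S₂ (θ (Equiv.swap (⟨k, Nat.lt_of_succ_lt hk⟩ : Fin n) ⟨k + 1, hk⟩
              ⟨k, Nat.lt_of_succ_lt hk⟩) -
            θ (Equiv.swap (⟨k, Nat.lt_of_succ_lt hk⟩ : Fin n) ⟨k + 1, hk⟩ ⟨k + 1, hk⟩))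
          else 1) := by
    apply Finset.prod_eq_single
      ((⟨k, Nat.lt_of_succ_lt hk⟩ : Fin n), (⟨k + 1, hk⟩ : Fin n))
    · rintro ⟨i, j⟩ _ hne
      rw [if_neg]
      rintro ⟨h1, h2⟩
      simp only [ne_eq, Prod.mk.injEq, not_and] at hne
      rw [Equiv.swap_apply_def, Equiv.swap_apply_def] at h2
      split_ifs at h2 <;>
        (simp only [Fin.lt_def, Fin.ext_iff] at *; omega)
    · intro h
      exact absurd (Finset.mem_univ _) h
  rw [hcalc, Equiv.swap_apply_left, Equiv.swap_apply_right,
    if_pos ⟨by simp [Fin.lt_def], by simp [Fin.lt_def]⟩]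

end mult

section op

variable (S₂ : ℝ → ℂ)

lemma memℒp_T (hSmeas : Measurable S₂) (hSmod : ∀ x : ℝ, ‖S₂ x‖ = 1) (σ : Equiv.Perm (Fin n)) (f : L2n n) :
    MemLp (fun θ : Fin n → ℝ => mult S₂ σ θ * f (θ ∘ σ)) 2
      (volume : Measure (Fin n → ℝ)) := by
  have hmp := measurePreserving_compPerm (n := n) σ
  have hfm : AEStronglyMeasurable (fun θ : Fin n → ℝ => f (θ ∘ σ))
      (volume : Measure (Fin n → ℝ)) :=
    (Lp.aestronglyMeasurable f).comp_measurePreserving hmp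
  constructor
  · exact ((measurable_mult hSmeas σ).aestronglyMeasurable).mul hfm
  · have h1 : eLpNorm (fun θ : Fin n → ℝ => mult S₂ σ θ * f (θ ∘ σ)) 2
        (volume : Measure (Fin n → ℝ))
        = eLpNorm (fun θ : Fin n → ℝ => f (θ ∘ σ)) 2 volume :=
      eLpNorm_congr_norm_ae (ae_of_all _ fun θ => by
        rw [norm_mul, norm_mult hSmod, one_mul])
    rw [h1,
      show (fun θ : Fin n → ℝ => f (θ ∘ σ)) = (⇑f ∘ fun θ : Fin n → ℝ => θ ∘ σ) from rfl,
      eLpNorm_comp_measurePreserving (Lp.aestronglyMeasurable f) hmp]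
    exact (Lp.memLp f).2

/-- The operator `f ↦ mult S₂ σ • (f ∘ σ)` on `L²`. -/
noncomputable def TD (hSmeas : Measurable S₂) (hSmod : ∀ x : ℝ, ‖S₂ x‖ = 1)
    (σ : Equiv.Perm (Fin n)) (f : L2n n) : L2n n :=
  (memℒp_T S₂ hSmeas hSmod σ f).toLp _

lemma coeFn_TD (hSmeas : Measurable S₂) (hSmod : ∀ x : ℝ, ‖S₂ x‖ = 1) (σ : Equiv.Perm (Fin n)) (f : L2n n) :
    TD S₂ hSmeas hSmod σ f =ᵐ[(volume : Measure (Fin n → ℝ))]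
      fun θ => mult S₂ σ θ * f (θ ∘ σ) :=
  MemLp.coeFn_toLp _

lemma norm_TD (hSmeas : Measurable S₂) (hSmod : ∀ x : ℝ, ‖S₂ x‖ = 1) (σ : Equiv.Perm (Fin n)) (f : L2n n) :
    ‖TD S₂ hSmeas hSmod σ f‖ = ‖f‖ := by
  rw [TD, Lp.norm_toLp]
  have h1 : eLpNorm (fun θ : Fin n → ℝ => mult S₂ σ θ * f (θ ∘ σ)) 2
      (volume : Measure (Fin n → ℝ))
      = eLpNorm (fun θ : Fin n → ℝ => f (θ ∘ σ)) 2 volume :=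
    eLpNorm_congr_norm_ae (ae_of_all _ fun θ => by
      rw [norm_mul, norm_mult hSmod, one_mul])
  rw [h1,
    show (fun θ : Fin n → ℝ => f (θ ∘ σ)) = (⇑f ∘ fun θ : Fin n → ℝ => θ ∘ σ) from rfl,
    eLpNorm_comp_measurePreserving (Lp.aestronglyMeasurable f)
      (measurePreserving_compPerm σ), Lp.norm_def]

lemma TD_add (hSmeas : Measurable S₂) (hSmod : ∀ x : ℝ, ‖S₂ x‖ = 1) (σ : Equiv.Perm (Fin n)) (f g : L2n n) :
    TD S₂ hSmeas hSmod σ (f + g) = TD S₂ hSmeas hSmod σ f + TD S₂ hSmeas hSmod σ g := by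
  apply Lp.ext
  filter_upwards [coeFn_TD S₂ hSmeas hSmod σ (f + g),
    comp_perm_ae σ (Lp.coeFn_add f g),
    Lp.coeFn_add (TD S₂ hSmeas hSmod σ f) (TD S₂ hSmeas hSmod σ g),
    comp_perm_ae σ (Filter.EventuallyEq.refl _ ⇑f),
    coeFn_TD S₂ hSmeas hSmod σ f, coeFn_TD S₂ hSmeas hSmod σ g] with θ e1 e2 e3 _ e5 e6
  rw [e1, e2, e3]
  simp only [Pi.add_apply]
  rw [e5, e6]
  ring

lemma TD_smul (hSmeas : Measurable S₂) (hSmod : ∀ x : ℝ, ‖S₂ x‖ = 1) (σ : Equiv.Perm (Fin n)) (c : ℂ) (f : L2n n) :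
    TD S₂ hSmeas hSmod σ (c • f) = c • TD S₂ hSmeas hSmod σ f := by
  apply Lp.ext
  filter_upwards [coeFn_TD S₂ hSmeas hSmod σ (c • f),
    comp_perm_ae σ (Lp.coeFn_smul c f),
    Lp.coeFn_smul c (TD S₂ hSmeas hSmod σ f),
    coeFn_TD S₂ hSmeas hSmod σ f] with θ e1 e2 e3 e4
  rw [e1, e2, Pi.smul_apply, e3, Pi.smul_apply, e4, smul_eq_mul, smul_eq_mul]
  ring

lemma TD_comp (hSmeas : Measurable S₂) (hSmod : ∀ x : ℝ, ‖S₂ x‖ = 1)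
    (hSinv : ∀ x : ℝ, S₂ (-x) = (S₂ x)⁻¹) (σ τ : Equiv.Perm (Fin n)) (f : L2n n) :
    TD S₂ hSmeas hSmod (σ * τ) f = TD S₂ hSmeas hSmod σ (TD S₂ hSmeas hSmod τ f) := by
  apply Lp.ext
  filter_upwards [coeFn_TD S₂ hSmeas hSmod (σ * τ) f,
    coeFn_TD S₂ hSmeas hSmod σ (TD S₂ hSmeas hSmod τ f),
    comp_perm_ae σ (coeFn_TD S₂ hSmeas hSmod τ f)] with θ e1 e2 e3
  rw [e1, e2, e3, mult_mul hSmod hSinv, mul_assoc]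
  have hc : θ ∘ ⇑(σ * τ) = (θ ∘ ⇑σ) ∘ ⇑τ := by
    funext i
    simp [Equiv.Perm.mul_apply]
  rw [hc]

lemma TD_one (hSmeas : Measurable S₂) (hSmod : ∀ x : ℝ, ‖S₂ x‖ = 1) (f : L2n n) : TD S₂ hSmeas hSmod 1 f = f := by
  apply Lp.ext
  filter_upwards [coeFn_TD S₂ hSmeas hSmod 1 f] with θ e1
  rw [e1, mult_one_apply, one_mul]
  have hc : θ ∘ ⇑(1 : Equiv.Perm (Fin n)) = θ := by
    funext i
    simp
  rw [hc]

/-- `TD` as a linear isometry equivalence. -/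
noncomputable def rho0 (hSmeas : Measurable S₂) (hSmod : ∀ x : ℝ, ‖S₂ x‖ = 1)
    (hSinv : ∀ x : ℝ, S₂ (-x) = (S₂ x)⁻¹) (σ : Equiv.Perm (Fin n)) : L2n n ≃ₗᵢ[ℂ] L2n n where
  toLinearEquiv :=
    { toFun := TD S₂ hSmeas hSmod σ
      map_add' := TD_add S₂ hSmeas hSmod σ
      map_smul' := TD_smul S₂ hSmeas hSmod σ
      invFun := TD S₂ hSmeas hSmod σ⁻¹
      left_inv := fun f => by
        show TD S₂ hSmeas hSmod σ⁻¹ (TD S₂ hSmeas hSmod σ f) = f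
        rw [← TD_comp S₂ hSmeas hSmod hSinv, inv_mul_cancel, TD_one]
      right_inv := fun f => by
        show TD S₂ hSmeas hSmod σ (TD S₂ hSmeas hSmod σ⁻¹ f) = f
        rw [← TD_comp S₂ hSmeas hSmod hSinv, mul_inv_cancel, TD_one] }
  norm_map' := norm_TD S₂ hSmeas hSmod σ

/-- The unitary representation of the symmetric group. -/
noncomputable def rho (hSmeas : Measurable S₂) (hSmod : ∀ x : ℝ, ‖S₂ x‖ = 1)
    (hSinv : ∀ x : ℝ, S₂ (-x) = (S₂ x)⁻¹) : Equiv.Perm (Fin n) →* (L2n n ≃ₗᵢ[ℂ] L2n n) where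
  toFun := rho0 S₂ hSmeas hSmod hSinv
  map_one' := by
    refine LinearIsometryEquiv.ext fun f => ?_
    exact TD_one S₂ hSmeas hSmod f
  map_mul' := fun σ τ => by
    refine LinearIsometryEquiv.ext fun f => ?_
    exact TD_comp S₂ hSmeas hSmod hSinv σ τ f

end op

end S0

/-- the operators `D_n(τ_k)` satisfy the defining relations of the symmetric
group, and hence `D_n` extends to a unitary representation of `S_n` on `L²(ℝⁿ)`. -/
theorem statement0 {n : ℕ} (S₂ : ℝ → ℂ) (hSmeas : Measurable S₂)
    (hSmod : ∀ θ : ℝ, ‖S₂ θ‖ = 1) (hSinv : ∀ θ : ℝ, S₂ (-θ) = (S₂ θ)⁻¹)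
    (D : ∀ k : ℕ, k + 1 < n → (L2n n →L[ℂ] L2n n))
    (hD : ∀ (k : ℕ) (hk : k + 1 < n), IsDnGenerator S₂ k hk (D k hk)) :
    (∀ (k : ℕ) (hk : k + 1 < n), D k hk ∘L D k hk = 1) ∧
    (∀ (j k : ℕ) (hj : j + 1 < n) (hk : k + 1 < n),
      (j + 1 < k ∨ k + 1 < j) → D j hj ∘L D k hk = D k hk ∘L D j hj) ∧
    (∀ (k : ℕ) (hk : k + 1 + 1 < n),
      D k (by omega) ∘L D (k + 1) hk ∘L D k (by omega) =
        D (k + 1) hk ∘L D k (by omega) ∘L D (k + 1) hk) ∧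
    (∃ ρ : Equiv.Perm (Fin n) →* (L2n n ≃ₗᵢ[ℂ] L2n n),
      ∀ (k : ℕ) (hk : k + 1 < n) (f : L2n n),
        ρ (Equiv.swap (⟨k, Nat.lt_of_succ_lt hk⟩ : Fin n) ⟨k + 1, hk⟩) f = D k hk f) := by
  classical
  -- every generator agrees with the corresponding `TD` operator
  have hDT : ∀ (k : ℕ) (hk : k + 1 < n) (f : L2n n),
      D k hk f = S0.TD S₂ hSmeas hSmod
        (Equiv.swap (⟨k, Nat.lt_of_succ_lt hk⟩ : Fin n) ⟨k + 1, hk⟩) f := by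
    intro k hk f
    apply Lp.ext
    filter_upwards [hD k hk f,
      S0.coeFn_TD S₂ hSmeas hSmod
        (Equiv.swap (⟨k, Nat.lt_of_succ_lt hk⟩ : Fin n) ⟨k + 1, hk⟩) f] with θ e1 e2
    rw [e1, e2, S0.mult_swap k hk]
    rfl
  refine ⟨?_, ?_, ?_, ?_⟩
  · intro k hk
    refine ContinuousLinearMap.ext fun f => ?_
    simp only [ContinuousLinearMap.comp_apply, ContinuousLinearMap.one_apply]
    rw [hDT, hDT, ← S0.TD_comp S₂ hSmeas hSmod hSinv, Equiv.swap_mul_self,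
      S0.TD_one]
  · intro j k hj hk hjk
    have hdis : (Equiv.swap (⟨j, Nat.lt_of_succ_lt hj⟩ : Fin n) ⟨j + 1, hj⟩).Disjoint
        (Equiv.swap (⟨k, Nat.lt_of_succ_lt hk⟩ : Fin n) ⟨k + 1, hk⟩) := by
      intro x
      by_cases hx : x = (⟨j, Nat.lt_of_succ_lt hj⟩ : Fin n) ∨ x = (⟨j + 1, hj⟩ : Fin n)
      · right
        rcases hx with rfl | rfl <;>
          exact Equiv.swap_apply_of_ne_of_ne
            (by simp only [Fin.ext_iff, ne_eq]; omega)
            (by simp only [Fin.ext_iff, ne_eq]; omega)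
      · left
        push_neg at hx
        exact Equiv.swap_apply_of_ne_of_ne hx.1 hx.2
    refine ContinuousLinearMap.ext fun f => ?_
    simp only [ContinuousLinearMap.comp_apply]
    rw [hDT j hj, hDT k hk, hDT k hk, hDT j hj,
      ← S0.TD_comp S₂ hSmeas hSmod hSinv, ← S0.TD_comp S₂ hSmeas hSmod hSinv,
      hdis.commute.eq]
  · intro k hk
    have hab : (⟨k, by omega⟩ : Fin n) ≠ ⟨k + 1, by omega⟩ := by
      simp only [Fin.ext_iff, ne_eq]; omega
    have hac : (⟨k, by omega⟩ : Fin n) ≠ ⟨k + 1 + 1, hk⟩ := by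
      simp only [Fin.ext_iff, ne_eq]; omega
    have hcb : (⟨k + 1 + 1, hk⟩ : Fin n) ≠ ⟨k + 1, by omega⟩ := by
      simp only [Fin.ext_iff, ne_eq]; omega
    have hbraid : Equiv.swap (⟨k, by omega⟩ : Fin n) ⟨k + 1, by omega⟩ *
        Equiv.swap (⟨k + 1, by omega⟩ : Fin n) ⟨k + 1 + 1, hk⟩ *
        Equiv.swap (⟨k, by omega⟩ : Fin n) ⟨k + 1, by omega⟩ =
        Equiv.swap (⟨k + 1, by omega⟩ : Fin n) ⟨k + 1 + 1, hk⟩ *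
        Equiv.swap (⟨k, by omega⟩ : Fin n) ⟨k + 1, by omega⟩ *
        Equiv.swap (⟨k + 1, by omega⟩ : Fin n) ⟨k + 1 + 1, hk⟩ := by
      have e1 := Equiv.swap_mul_swap_mul_swap (x := (⟨k + 1 + 1, hk⟩ : Fin n))
        (y := (⟨k + 1, by omega⟩ : Fin n)) (z := (⟨k, by omega⟩ : Fin n))
        hcb hac.symm
      have e2 := Equiv.swap_mul_swap_mul_swap (x := (⟨k, by omega⟩ : Fin n))
        (y := (⟨k + 1, by omega⟩ : Fin n)) (z := (⟨k + 1 + 1, hk⟩ : Fin n))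
        hab hac
      rw [Equiv.swap_comm (⟨k + 1, by omega⟩ : Fin n) (⟨k, by omega⟩ : Fin n)] at e1
      rw [Equiv.swap_comm (⟨k + 1 + 1, hk⟩ : Fin n) (⟨k + 1, by omega⟩ : Fin n)] at e1
      rw [e1, e2]
      exact (Equiv.swap_comm _ _)
    refine ContinuousLinearMap.ext fun f => ?_
    simp only [ContinuousLinearMap.comp_apply]
    rw [hDT k, hDT (k + 1), hDT k, hDT (k + 1), hDT k, hDT (k + 1),
      ← S0.TD_comp S₂ hSmeas hSmod hSinv, ← S0.TD_comp S₂ hSmeas hSmod hSinv,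
      ← S0.TD_comp S₂ hSmeas hSmod hSinv, ← S0.TD_comp S₂ hSmeas hSmod hSinv]
    exact congrArg (fun s : Equiv.Perm (Fin n) => S0.TD S₂ hSmeas hSmod s f) hbraid
  · refine ⟨S0.rho S₂ hSmeas hSmod hSinv, fun k hk f => ?_⟩
    rw [hDT k hk f]
    rfl
end

section
/- For the representation D_n of S_n on L²(ℝⁿ) determined by a modulus-one phase function S₂ with S₂(-θ) = S₂(θ)⁻¹, the action of an arbitrary permutation π ∈ S_n is given explicitly by (D_n(π)f)(θ₁,...,θ_n) = S^π(θ₁,...,θ_n) · f(θ_{π(1)},...,θ_{π(n)}), where S^π(θ₁,...,θ_n) = ∏_{1 ≤ l < k ≤ n, π(l) > π(k)} S₂(θ_{π(l)} - θ_{π(k)}). -/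
open MeasureTheory Complex

/-- Composing with a permutation of the coordinates preserves the volume on `ℝⁿ`. -/
lemma measurePreserving_compPerm {n : ℕ} (e : Equiv.Perm (Fin n)) :
    MeasurePreserving (fun θ : Fin n → ℝ => fun i => θ (e i))
      (volume : Measure (Fin n → ℝ)) volume := by
  have h := MeasureTheory.volume_measurePreserving_piCongrLeft (fun _ : Fin n => ℝ) e.symm
  have heq : ⇑(MeasurableEquiv.piCongrLeft (fun _ : Fin n => ℝ) e.symm)
      = fun θ : Fin n → ℝ => fun i => θ (e i) := by
    rw [MeasurableEquiv.coe_piCongrLeft]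
    funext θ i
    have h2 := Equiv.piCongrLeft_apply_apply (P := fun _ : Fin n => ℝ) (e := e.symm) θ (e i)
    simpa using h2
  exact heq ▸ h

/-- Adjacent swap and order comparison. -/
lemma swap_lt_iff {n k : ℕ} (hk : k + 1 < n) {x y : Fin n}
    (h1 : ¬(x = (⟨k, Nat.lt_of_succ_lt hk⟩ : Fin n) ∧ y = ⟨k + 1, hk⟩))
    (h2 : ¬(x = (⟨k + 1, hk⟩ : Fin n) ∧ y = ⟨k, Nat.lt_of_succ_lt hk⟩)) :
    Equiv.swap (⟨k, Nat.lt_of_succ_lt hk⟩ : Fin n) ⟨k + 1, hk⟩ x <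
      Equiv.swap (⟨k, Nat.lt_of_succ_lt hk⟩ : Fin n) ⟨k + 1, hk⟩ y ↔ x < y := by
  simp only [Equiv.swap_apply_def]
  split_ifs <;> simp only [Fin.ext_iff, Fin.lt_def, not_and] at * <;> omega

/-- The key combinatorial identity on the inversion products. -/
lemma prod_inversions_swap_mul {n : ℕ} (S₂ : ℝ → ℂ)
    (hSmod : ∀ t : ℝ, ‖S₂ t‖ = 1) (hSinv : ∀ t : ℝ, S₂ (-t) = (S₂ t)⁻¹)
    {k : ℕ} (hk : k + 1 < n) (π : Equiv.Perm (Fin n)) (θ : Fin n → ℝ) :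
    (∏ p ∈ Finset.univ.filter (fun p : Fin n × Fin n => p.1 < p.2 ∧
          (Equiv.swap (⟨k, Nat.lt_of_succ_lt hk⟩ : Fin n) ⟨k + 1, hk⟩ * π) p.2 <
          (Equiv.swap (⟨k, Nat.lt_of_succ_lt hk⟩ : Fin n) ⟨k + 1, hk⟩ * π) p.1),
        S₂ (θ ((Equiv.swap (⟨k, Nat.lt_of_succ_lt hk⟩ : Fin n) ⟨k + 1, hk⟩ * π) p.1) -
            θ ((Equiv.swap (⟨k, Nat.lt_of_succ_lt hk⟩ : Fin n) ⟨k + 1, hk⟩ * π) p.2)))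
      = S₂ (θ ⟨k + 1, hk⟩ - θ ⟨k, Nat.lt_of_succ_lt hk⟩) *
        ∏ p ∈ Finset.univ.filter (fun p : Fin n × Fin n => p.1 < p.2 ∧ π p.2 < π p.1),
          S₂ (θ ((Equiv.swap (⟨k, Nat.lt_of_succ_lt hk⟩ : Fin n) ⟨k + 1, hk⟩ * π) p.1) -
              θ ((Equiv.swap (⟨k, Nat.lt_of_succ_lt hk⟩ : Fin n) ⟨k + 1, hk⟩ * π) p.2)) := by
  set u : Fin n := ⟨k, Nat.lt_of_succ_lt hk⟩ with hu
  set v : Fin n := ⟨k + 1, hk⟩ with hv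
  set τ : Equiv.Perm (Fin n) := Equiv.swap u v * π with hτdef
  have huv : u < v := by simp [hu, hv, Fin.lt_def]
  set a := π.symm u with ha
  set b := π.symm v with hb
  have hπa : π a = u := π.apply_symm_apply u
  have hπb : π b = v := π.apply_symm_apply v
  have hab : a ≠ b := by
    intro h
    rw [h] at hπa
    rw [hπa] at hπb
    exact absurd hπb (ne_of_lt huv)
  have hτ : ∀ x, τ x = Equiv.swap u v (π x) := fun x => rfl
  have hτa : τ a = v := by rw [hτ, hπa, Equiv.swap_apply_left]
  have hτb : τ b = u := by rw [hτ, hπb, Equiv.swap_apply_right]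
  have key : ∀ p : Fin n × Fin n, p ≠ (a, b) → p ≠ (b, a) →
      (τ p.2 < τ p.1 ↔ π p.2 < π p.1) := by
    intro p hp1 hp2
    rw [hτ, hτ]
    apply swap_lt_iff hk
    · rintro ⟨h3, h4⟩
      apply hp2
      have e1 : p.1 = b := by
        have h5 := congrArg π.symm h4
        rwa [Equiv.symm_apply_apply] at h5
      have e2 : p.2 = a := by
        have h5 := congrArg π.symm h3
        rwa [Equiv.symm_apply_apply] at h5
      exact Prod.ext e1 e2
    · rintro ⟨h3, h4⟩
      apply hp1
      have e1 : p.1 = a := by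
        have h5 := congrArg π.symm h4
        rwa [Equiv.symm_apply_apply] at h5
      have e2 : p.2 = b := by
        have h5 := congrArg π.symm h3
        rwa [Equiv.symm_apply_apply] at h5
      exact Prod.ext e1 e2
  have hSne : S₂ (θ v - θ u) ≠ 0 := by
    intro h
    have h' := hSmod (θ v - θ u)
    rw [h] at h'
    simp at h'
  rcases hab.lt_or_gt with hlt | hlt
  · -- a < b : the new inversion (a, b) is created
    have hnot : (a, b) ∉ Finset.univ.filter
        (fun p : Fin n × Fin n => p.1 < p.2 ∧ π p.2 < π p.1) := by
      simp only [Finset.mem_filter, Finset.mem_univ, true_and, not_and]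
      intro _
      show ¬ π b < π a
      rw [hπa, hπb]
      exact not_lt.2 huv.le
    have hset : Finset.univ.filter (fun p : Fin n × Fin n => p.1 < p.2 ∧ τ p.2 < τ p.1)
        = insert (a, b) (Finset.univ.filter
            (fun p : Fin n × Fin n => p.1 < p.2 ∧ π p.2 < π p.1)) := by
      ext p
      simp only [Finset.mem_filter, Finset.mem_univ, true_and, Finset.mem_insert]
      constructor
      · rintro ⟨hp1, hp2⟩
        by_cases hpa : p = (a, b)
        · exact Or.inl hpa
        by_cases hpb : p = (b, a)
        · have h6 : b < a := by rw [hpb] at hp1; exact hp1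
          exact absurd h6 (not_lt.2 hlt.le)
        · exact Or.inr ⟨hp1, (key p hpa hpb).1 hp2⟩
      · rintro (rfl | ⟨hp1, hp2⟩)
        · refine ⟨hlt, ?_⟩
          show τ b < τ a
          rw [hτa, hτb]
          exact huv
        · refine ⟨hp1, ?_⟩
          by_cases hpa : p = (a, b)
          · have h6 : π b < π a := by rw [hpa] at hp2; exact hp2
            rw [hπa, hπb] at h6
            exact absurd h6 (not_lt.2 huv.le)
          by_cases hpb : p = (b, a)
          · have h6 : b < a := by rw [hpb] at hp1; exact hp1
            exact absurd h6 (not_lt.2 hlt.le)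
          · exact (key p hpa hpb).2 hp2
    rw [hset, Finset.prod_insert hnot]
    congr 1
    show S₂ (θ (τ a) - θ (τ b)) = S₂ (θ v - θ u)
    rw [hτa, hτb]
  · -- b < a : the inversion (b, a) is destroyed
    have hnot : (b, a) ∉ Finset.univ.filter
        (fun p : Fin n × Fin n => p.1 < p.2 ∧ τ p.2 < τ p.1) := by
      simp only [Finset.mem_filter, Finset.mem_univ, true_and, not_and]
      intro _
      show ¬ τ a < τ b
      rw [hτa, hτb]
      exact not_lt.2 huv.le
    have hset : Finset.univ.filter (fun p : Fin n × Fin n => p.1 < p.2 ∧ π p.2 < π p.1)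
        = insert (b, a) (Finset.univ.filter
            (fun p : Fin n × Fin n => p.1 < p.2 ∧ τ p.2 < τ p.1)) := by
      ext p
      simp only [Finset.mem_filter, Finset.mem_univ, true_and, Finset.mem_insert]
      constructor
      · rintro ⟨hp1, hp2⟩
        by_cases hpb : p = (b, a)
        · exact Or.inl hpb
        by_cases hpa : p = (a, b)
        · have h6 : a < b := by rw [hpa] at hp1; exact hp1
          exact absurd h6 (not_lt.2 hlt.le)
        · exact Or.inr ⟨hp1, (key p hpa hpb).2 hp2⟩
      · rintro (rfl | ⟨hp1, hp2⟩)
        · refine ⟨hlt, ?_⟩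
          show π a < π b
          rw [hπa, hπb]
          exact huv
        · refine ⟨hp1, ?_⟩
          by_cases hpb : p = (b, a)
          · have h6 : τ a < τ b := by rw [hpb] at hp2; exact hp2
            rw [hτa, hτb] at h6
            exact absurd h6 (not_lt.2 huv.le)
          by_cases hpa : p = (a, b)
          · have h6 : a < b := by rw [hpa] at hp1; exact hp1
            exact absurd h6 (not_lt.2 hlt.le)
          · exact (key p hpa hpb).1 hp2
    rw [hset, Finset.prod_insert hnot]
    have hfac : S₂ (θ (τ b) - θ (τ a)) = (S₂ (θ v - θ u))⁻¹ := by
      rw [hτa, hτb, ← hSinv, neg_sub]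
    rw [show S₂ (θ (τ (b, a).1) - θ (τ (b, a).2)) = (S₂ (θ v - θ u))⁻¹ from hfac,
      ← mul_assoc, mul_inv_cancel₀ hSne, one_mul]

/-- Adjacent transpositions generate the symmetric group (monoid version tailored to
the statement of `statement2`). -/
lemma adjacent_swaps_generate (n : ℕ) :
    Submonoid.closure {σ : Equiv.Perm (Fin n) |
      ∃ (k : ℕ) (hk : k + 1 < n),
        σ = Equiv.swap (⟨k, Nat.lt_of_succ_lt hk⟩ : Fin n) ⟨k + 1, hk⟩} = ⊤ := by
  match n with
  | 0 =>
    refine top_unique fun x _ => ?_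
    have hx : x = 1 := by
      ext i
      exact i.elim0
    rw [hx]
    exact one_mem _
  | (m + 1) =>
    refine top_unique ?_
    rw [← Equiv.Perm.mclosure_swap_castSucc_succ m]
    refine Submonoid.closure_le.2 ?_
    rintro _ ⟨i, rfl⟩
    apply Submonoid.subset_closure
    refine ⟨i.val, by omega, ?_⟩
    congr 1 <;> ext <;> simp

/-- the explicit action of an arbitrary permutation `π` in the
representation `D_n` of `S_n` on `L²(ℝⁿ)` determined by `S₂`:
`(D_n(π)f)(θ₁,…,θ_n) = S^π(θ₁,…,θ_n) · f(θ_{π(1)},…,θ_{π(n)})`, where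
`S^π(θ) = ∏_{l < k, π(l) > π(k)} S₂(θ_{π(l)} - θ_{π(k)})`. -/
theorem statement2 {n : ℕ} (S₂ : ℝ → ℂ) (hSmeas : Measurable S₂)
    (hSmod : ∀ θ : ℝ, ‖S₂ θ‖ = 1) (hSinv : ∀ θ : ℝ, S₂ (-θ) = (S₂ θ)⁻¹)
    (ρ : Equiv.Perm (Fin n) →* (L2n n ≃ₗᵢ[ℂ] L2n n))
    (hρ : ∀ (k : ℕ) (hk : k + 1 < n),
      IsDnGenerator S₂ k hk
        ((ρ (Equiv.swap (⟨k, Nat.lt_of_succ_lt hk⟩ : Fin n)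
            ⟨k + 1, hk⟩)).toLinearIsometry.toContinuousLinearMap)) :
    ∀ (π : Equiv.Perm (Fin n)) (f : L2n n),
      ∀ᵐ θ ∂(volume : Measure (Fin n → ℝ)),
        ρ π f θ =
          (∏ p ∈ Finset.univ.filter
              (fun p : Fin n × Fin n => p.1 < p.2 ∧ π p.2 < π p.1),
            S₂ (θ (π p.1) - θ (π p.2))) * f (fun i => θ (π i)) := by
  intro π
  refine Submonoid.induction_of_closure_eq_top_left (adjacent_swaps_generate n) π ?_ ?_
  · -- base case: π = 1
    intro f
    refine Filter.Eventually.of_forall fun θ => ?_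
    have hempty : Finset.univ.filter
        (fun p : Fin n × Fin n => p.1 < p.2 ∧ (1 : Equiv.Perm (Fin n)) p.2 <
          (1 : Equiv.Perm (Fin n)) p.1) = ∅ := by
      refine Finset.filter_false_of_mem fun p _ => ?_
      rintro ⟨h1, h2⟩
      simp only [Equiv.Perm.coe_one, id_eq] at h2
      exact absurd h2 (not_lt.2 h1.le)
    rw [hempty]
    simp [map_one]
  · -- inductive step
    rintro σ ⟨k, hk, rfl⟩ π hπ f
    set u : Fin n := ⟨k, Nat.lt_of_succ_lt hk⟩ with hu
    set v : Fin n := ⟨k + 1, hk⟩ with hv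
    have h1 := hρ k hk (ρ π f)
    have h2 := hπ f
    have hT : MeasurePreserving (fun θ : Fin n → ℝ => fun i => θ (Equiv.swap u v i))
        (volume : Measure (Fin n → ℝ)) volume := measurePreserving_compPerm (Equiv.swap u v)
    have h3 := hT.quasiMeasurePreserving.ae_eq_comp h2
    have hmul : ∀ θ : Fin n → ℝ, (ρ (Equiv.swap u v * π) f) θ
        = (ρ (Equiv.swap u v) (ρ π f)) θ := by
      intro θ
      rw [map_mul ρ]
      rfl
    filter_upwards [h1, h3] with θ e1 e3
    have e1' : (ρ (Equiv.swap u v) (ρ π f)) θ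
        = S₂ (θ v - θ u) * (ρ π f) (fun i => θ (Equiv.swap u v i)) := e1
    have e3' : (ρ π f) (fun i => θ (Equiv.swap u v i))
        = (∏ p ∈ Finset.univ.filter
              (fun p : Fin n × Fin n => p.1 < p.2 ∧ π p.2 < π p.1),
            S₂ (θ (Equiv.swap u v (π p.1)) - θ (Equiv.swap u v (π p.2)))) *
          f (fun i => θ (Equiv.swap u v (π i))) := e3
    rw [hmul, e1', e3', ← mul_assoc]
    have hprod := prod_inversions_swap_mul S₂ hSmod hSinv hk π θ
    have hco : ∀ x, (Equiv.swap u v * π) x = Equiv.swap u v (π x) := fun _ => rfl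
    simp only [hco, Equiv.Perm.mul_apply] at hprod
    rw [← hprod]
    rfl
end

section
/- Let H be a Hilbert space carrying a net of von Neumann algebras indexed by wedges, let W ⊂ ℝ^d be a region with W + x ⊂ W for some direction x, let U be a unitary representation of translations under which the net is covariant with invariant vacuum Ω satisfying the cluster property ⟨AΩ, U(nx)BΩ⟩ → ⟨Ω,AΩ⟩⟨Ω,BΩ⟩ as n → ∞, and let H ≥ 0 be the Hamiltonian commuting with the spatial translations U(nx). If A(W) ≠ ℂ·1, then the map Θ_{β,W} : A(W) → H, A ↦ e^{-βH}AΩ, is not compact for any β > 0. Specifically: if A ∈ A(W) with ⟨Ω, AΩ⟩ = 0, A ≠ 0, and e^{-βH}AΩ ≠ 0, then the sequence Ψ_n := e^{-βH}U(nx)AU(nx)^{-1}Ω has constant norm ‖e^{-βH}AΩ‖ ≠ 0 and ⟨Ψ_n, Ψ_m⟩ → 0 as |n-m| → ∞, hence has no norm-convergent subsequence. -/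
open Filter

private lemma stmt14_comm_iter {H : Type*} [NormedAddCommGroup H] [InnerProductSpace ℂ H]
    (u : H ≃ₗᵢ[ℂ] H) (e : H →L[ℂ] H) (hcomm : ∀ ξ : H, e (u ξ) = u (e ξ)) :
    ∀ (m : ℕ) (ξ : H), e ((⇑u)^[m] ξ) = (⇑u)^[m] (e ξ) := by
  intro m
  induction m with
  | zero => intro ξ; simp
  | succ n ih =>
    intro ξ
    rw [Function.iterate_succ_apply', Function.iterate_succ_apply', hcomm, ih]

private lemma stmt14_inner_iter {H : Type*} [NormedAddCommGroup H] [InnerProductSpace ℂ H]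
    (u : H ≃ₗᵢ[ℂ] H) :
    ∀ (m : ℕ) (x y : H), (inner ℂ ((⇑u)^[m] x) ((⇑u)^[m] y) : ℂ) = inner ℂ x y := by
  intro m
  induction m with
  | zero => intro x y; simp
  | succ n ih =>
    intro x y
    rw [Function.iterate_succ_apply', Function.iterate_succ_apply',
      u.inner_map_map, ih]

private lemma stmt14_monoadd {φ : ℕ → ℕ} (hφ : StrictMono φ) (m k : ℕ) :
    φ m + k ≤ φ (m + k) := by
  induction k with
  | zero => simp
  | succ n ih =>
    have h1 : φ (m + n) < φ (m + n + 1) := hφ (by omega)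
    show φ m + (n + 1) ≤ φ (m + n + 1)
    omega

/-- in a Hilbert space carrying a unitary translation `u` with invariant unit
vacuum vector `Ω` satisfying the cluster property, and a positive-temperature damping
operator `e` ("`e^{-βH}`", self-adjoint, fixing `Ω`, commuting with the translations),
the map `Θ_{β,W} : A ↦ e(AΩ)` on a translation-stable operator algebra `S` ("`A(W)`",
with `W + x ⊂ W`) is not compact whenever `S` contains a nonzero `A` with
`⟨Ω, AΩ⟩ = 0` and `e(AΩ) ≠ 0`: the sequence `Ψₙ = e(U(nx) A U(nx)⁻¹ Ω)` has constant
nonzero norm, its scalar products `⟨Ψₙ, Ψₘ⟩` tend to `0` as `|n-m| → ∞`, and it has no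
norm-convergent subsequence. -/
theorem statement14 {H : Type*} [NormedAddCommGroup H] [InnerProductSpace ℂ H]
    [CompleteSpace H]
    (Ω : H) (hΩ : ‖Ω‖ = 1)
    (u : H ≃ₗᵢ[ℂ] H) (huΩ : u Ω = Ω)
    (e : H →L[ℂ] H) (he_sa : IsSelfAdjoint e) (heΩ : e Ω = Ω)
    (hcomm : ∀ ξ : H, e (u ξ) = u (e ξ))
    (S : StarSubalgebra ℂ (H →L[ℂ] H))
    (hstable : ∀ B ∈ S,
      (u.toLinearIsometry.toContinuousLinearMap ∘L B ∘L
        u.symm.toLinearIsometry.toContinuousLinearMap) ∈ S)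
    (hcluster : ∀ ξ η : H,
      Tendsto (fun m : ℕ => (inner ℂ ξ ((⇑u)^[m] η) : ℂ)) atTop
        (nhds ((inner ℂ ξ Ω : ℂ) * (inner ℂ Ω η : ℂ))))
    (A : H →L[ℂ] H) (hA : A ∈ S) (hA0 : A ≠ 0)
    (hAΩ : (inner ℂ Ω (A Ω) : ℂ) = 0) (heA : e (A Ω) ≠ 0) :
    (∀ m : ℕ, ‖e ((⇑u)^[m] (A Ω))‖ = ‖e (A Ω)‖) ∧
    (∀ ε : ℝ, 0 < ε → ∃ N : ℕ, ∀ m k : ℕ, m + N ≤ k →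
      ‖(inner ℂ (e ((⇑u)^[m] (A Ω))) (e ((⇑u)^[k] (A Ω))) : ℂ)‖ < ε) ∧
    (¬ ∃ (φ : ℕ → ℕ) (ξ : H), StrictMono φ ∧
      Tendsto (fun j : ℕ => e ((⇑u)^[φ j] (A Ω))) atTop (nhds ξ)) ∧
    (¬ ∃ K : Set H, IsCompact K ∧ ∀ B ∈ S, ‖B‖ ≤ ‖A‖ → e (B Ω) ∈ K) := by
  have hsym : (e : H →ₗ[ℂ] H).IsSymmetric :=
    (ContinuousLinearMap.isSelfAdjoint_iff_isSymmetric).mp he_sa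
  -- iterate-norm invariance
  have hiter_norm : ∀ (m : ℕ) (ξ : H), ‖(⇑u)^[m] ξ‖ = ‖ξ‖ := by
    intro m
    induction m with
    | zero => intro ξ; simp
    | succ n ih =>
      intro ξ
      rw [Function.iterate_succ_apply', u.norm_map, ih]
  have part1 : ∀ m : ℕ, ‖e ((⇑u)^[m] (A Ω))‖ = ‖e (A Ω)‖ := by
    intro m
    rw [stmt14_comm_iter u e hcomm, hiter_norm]
  -- key identity for inner ℂ products
  have hkey : ∀ m n : ℕ,
      (inner ℂ (e ((⇑u)^[m] (A Ω))) (e ((⇑u)^[m + n] (A Ω))) : ℂ) =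
        inner ℂ (A Ω) ((⇑u)^[n] (e (e (A Ω)))) := by
    intro m n
    rw [stmt14_comm_iter u e hcomm, stmt14_comm_iter u e hcomm,
      Function.iterate_add_apply, stmt14_inner_iter u m]
    have h1 : (inner ℂ (e (A Ω)) ((⇑u)^[n] (e (A Ω))) : ℂ) =
        inner ℂ (A Ω) (e ((⇑u)^[n] (e (A Ω)))) := hsym (A Ω) _
    rw [h1, stmt14_comm_iter u e hcomm]
  -- cluster limit
  have hlim : Tendsto (fun n : ℕ => (inner ℂ (A Ω) ((⇑u)^[n] (e (e (A Ω)))) : ℂ)) atTop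
      (nhds 0) := by
    have := hcluster (A Ω) (e (e (A Ω)))
    have h0 : (inner ℂ (A Ω) Ω : ℂ) = 0 := by
      rw [← inner_conj_symm, hAΩ, map_zero]
    rwa [h0, zero_mul] at this
  have part2 : ∀ ε : ℝ, 0 < ε → ∃ N : ℕ, ∀ m k : ℕ, m + N ≤ k →
      ‖(inner ℂ (e ((⇑u)^[m] (A Ω))) (e ((⇑u)^[k] (A Ω))) : ℂ)‖ < ε := by
    intro ε hε
    have := (Metric.tendsto_atTop.mp hlim) ε hε
    obtain ⟨N, hN⟩ := this
    refine ⟨N, fun m k hmk => ?_⟩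
    obtain ⟨n, rfl⟩ : ∃ n, k = m + n := ⟨k - m, by omega⟩
    rw [hkey m n]
    have := hN n (by omega)
    simpa [dist_eq_norm] using this
  -- part 3
  have part3 : ¬ ∃ (φ : ℕ → ℕ) (ξ : H), StrictMono φ ∧
      Tendsto (fun j : ℕ => e ((⇑u)^[φ j] (A Ω))) atTop (nhds ξ) := by
    rintro ⟨φ, ξ, hφ, htend⟩
    set c : ℝ := ‖e (A Ω)‖ with hc
    have hcpos : 0 < c := norm_pos_iff.mpr heA
    obtain ⟨N, hN⟩ := part2 (c ^ 2 / 2) (by positivity)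
    have hcauchy : CauchySeq (fun j : ℕ => e ((⇑u)^[φ j] (A Ω))) := htend.cauchySeq
    obtain ⟨M, hM⟩ := Metric.cauchySeq_iff.mp hcauchy c hcpos
    have hsep : φ M + N ≤ φ (M + N) := stmt14_monoadd hφ M N
    have hinner := hN (φ M) (φ (M + N)) hsep
    have hdist := hM (M + N) (Nat.le_add_right M N) M le_rfl
    set a := e ((⇑u)^[φ (M + N)] (A Ω)) with ha
    set b := e ((⇑u)^[φ M] (A Ω)) with hb
    have hna : ‖a‖ = c := part1 _
    have hnb : ‖b‖ = c := part1 _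
    have hsq : ‖a - b‖ ^ 2 = ‖a‖ ^ 2 - 2 * RCLike.re (inner ℂ a b : ℂ) + ‖b‖ ^ 2 :=
      norm_sub_sq a b
    have hre : RCLike.re (inner ℂ a b : ℂ) ≤ ‖(inner ℂ a b : ℂ)‖ :=
      RCLike.re_le_norm _
    have hib : ‖(inner ℂ b a : ℂ)‖ < c ^ 2 / 2 := hinner
    have hiba : ‖(inner ℂ a b : ℂ)‖ = ‖(inner ℂ b a : ℂ)‖ := by
      rw [← inner_conj_symm b a, RCLike.norm_conj]
    have hdist' : dist a b < c := hdist
    rw [dist_eq_norm] at hdist'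
    nlinarith [norm_nonneg (a - b)]
  refine ⟨part1, part2, part3, ?_⟩
  -- part 4
  rintro ⟨K, hK, hKmem⟩
  -- construct the conjugated operators
  have hconj : ∀ m : ℕ, ∃ B ∈ S, ‖B‖ = ‖A‖ ∧ B Ω = (⇑u)^[m] (A Ω) := by
    intro m
    induction m with
    | zero => exact ⟨A, hA, rfl, by simp⟩
    | succ n ih =>
      obtain ⟨B, hBS, hBn, hBΩ⟩ := ih
      refine ⟨_, hstable B hBS, ?_, ?_⟩
      · have hle : ∀ (C : H →L[ℂ] H),
            ‖(u.toLinearIsometry.toContinuousLinearMap ∘L C ∘L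
              u.symm.toLinearIsometry.toContinuousLinearMap)‖ ≤ ‖C‖ := by
          intro C
          refine ContinuousLinearMap.opNorm_le_bound _ (norm_nonneg C) fun x => ?_
          simp only [ContinuousLinearMap.comp_apply,
            LinearIsometry.coe_toContinuousLinearMap, LinearIsometryEquiv.coe_toLinearIsometry,
            u.norm_map, u.symm.norm_map]
          calc ‖C (u.symm x)‖ ≤ ‖C‖ * ‖u.symm x‖ := C.le_opNorm _
            _ = ‖C‖ * ‖x‖ := by rw [u.symm.norm_map]
        refine le_antisymm (by rw [← hBn]; exact hle B) ?_
        rw [← hBn]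
        refine ContinuousLinearMap.opNorm_le_bound _ (norm_nonneg _) fun x => ?_
        have hx : ‖B x‖ = ‖(u.toLinearIsometry.toContinuousLinearMap ∘L B ∘L
            u.symm.toLinearIsometry.toContinuousLinearMap) (u x)‖ := by
          simp [u.norm_map]
        rw [hx]
        calc ‖(u.toLinearIsometry.toContinuousLinearMap ∘L B ∘L
              u.symm.toLinearIsometry.toContinuousLinearMap) (u x)‖
            ≤ ‖(u.toLinearIsometry.toContinuousLinearMap ∘L B ∘L
              u.symm.toLinearIsometry.toContinuousLinearMap)‖ * ‖u x‖ :=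
              ContinuousLinearMap.le_opNorm _ _
          _ = _ := by rw [u.norm_map]
      · simp only [ContinuousLinearMap.comp_apply,
          LinearIsometry.coe_toContinuousLinearMap, LinearIsometryEquiv.coe_toLinearIsometry]
        have hsΩ : u.symm Ω = Ω := u.symm_apply_eq.mpr huΩ.symm
        rw [hsΩ, hBΩ, Function.iterate_succ_apply']
  choose B hBS hBn hBΩ using hconj
  have hmem : ∀ m : ℕ, e ((⇑u)^[m] (A Ω)) ∈ K := by
    intro m
    rw [← hBΩ m]
    exact hKmem (B m) (hBS m) (le_of_eq (hBn m))
  obtain ⟨ξ, _, φ, hφ, htend⟩ :=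
    hK.tendsto_subseq (x := fun m => e ((⇑u)^[m] (A Ω))) hmem
  exact part3 ⟨φ, ξ, hφ, htend⟩
end
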